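/- Let M be a compact metric space, Φ:ℝ^d×M→M a continuous ℝ^d-action with ε₀(Φ) = inf({‖v‖ : v≠0, ∃x∈M with Φ_v(x)=x} ∪ {1}) > 0, Ψ a continuous ℝ^d-action commuting with Φ, a>0, μ∈(0, ε₀(Φ)/3), and z: Ō_a×M → Ō_μ a continuous map with Ψ_u(x) = Φ_{z(u,x)}(x) for all (u,x)∈Ō_a×M, where Ō_r = {v∈ℝ^d : ‖v‖≤r}. Then there exists a continuous map A: M → M_{d×d}(ℝ) into the space of d×d real matrices such that z(u, x) = A(x)u for all x∈M and u∈Ō_a. -/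

import Mathlib

open Filter Topology Metric

section aux
variable {d : ℕ}

noncomputable def eVec (d : ℕ) (j : Fin d) : EuclideanSpace ℝ (Fin d) :=
  EuclideanSpace.single j (1 : ℝ)

lemma eVec_apply (j i : Fin d) : eVec d j i = if i = j then (1:ℝ) else 0 := by
  simp [eVec, EuclideanSpace.single_apply]

lemma partial_sum_apply (u : EuclideanSpace ℝ (Fin d)) (s : Finset (Fin d)) (i : Fin d) :
    (∑ j ∈ s, u j • eVec d j) i = if i ∈ s then u i else 0 := by
  classical
  induction s using Finset.induction_on with
  | empty => simp
  | insert _ _ hjs =>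
    rename_i j s ih
    rw [Finset.sum_insert hjs]
    have : (u j • eVec d j + ∑ x ∈ s, u x • eVec d x) i
        = u j * eVec d j i + (∑ x ∈ s, u x • eVec d x) i := rfl
    rw [this, ih, eVec_apply]
    by_cases h1 : i = j
    · subst h1; simp [hjs]
    · simp [h1, Finset.mem_insert]

lemma partial_sum_norm_le (u : EuclideanSpace ℝ (Fin d)) (s : Finset (Fin d)) :
    ‖∑ j ∈ s, u j • eVec d j‖ ≤ ‖u‖ := by
  classical
  rw [EuclideanSpace.norm_eq, EuclideanSpace.norm_eq]
  apply Real.sqrt_le_sqrt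
  apply Finset.sum_le_sum
  intro i _
  rw [partial_sum_apply]
  by_cases h : i ∈ s <;> simp [h] <;> positivity

lemma eVec_sum (u : EuclideanSpace ℝ (Fin d)) : ∑ j, u j • eVec d j = u := by
  ext i
  rw [partial_sum_apply]
  simp

end aux

lemma lin_of_add {E : Type*} [NormedAddCommGroup E] [NormedSpace ℝ E]
    {a : ℝ} (ha : 0 < a) (f : ℝ → E)
    (hf : ContinuousOn f (Set.Icc (-a) a))
    (hadd : ∀ s t : ℝ, |s| ≤ a → |t| ≤ a → |s + t| ≤ a → f (s + t) = f s + f t) :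
    ∀ t : ℝ, |t| ≤ a → f t = (t / a) • f a := by
  have h0 : f 0 = 0 := by
    have := hadd 0 0 (by simpa using ha.le) (by simpa using ha.le) (by simpa using ha.le)
    simp only [add_zero] at this
    exact (left_eq_add.mp this)
  -- natural multiples
  have hnat : ∀ (k : ℕ) (s : ℝ), 0 ≤ s → (k : ℝ) * s ≤ a → f ((k : ℝ) * s) = (k : ℝ) • f s := by
    intro k
    induction k with
    | zero => intro s _ _; simpa using h0
    | succ k ih =>
      intro s hs hk
      have hks : (k : ℝ) * s ≤ ((k : ℝ) + 1) * s := by nlinarith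
      have hsle : s ≤ ((k : ℝ) + 1) * s := by nlinarith
      have h1 : |(k : ℝ) * s| ≤ a := by
        rw [abs_of_nonneg (by positivity)]; push_cast at hk ⊢; linarith
      have h2 : |s| ≤ a := by rw [abs_of_nonneg hs]; push_cast at hk; linarith
      have h3 : |(k : ℝ) * s + s| ≤ a := by
        rw [abs_of_nonneg (by positivity)]; push_cast at hk; linarith
      have := hadd ((k : ℝ) * s) s h1 h2 h3
      push_cast
      rw [show ((k : ℝ) + 1) * s = (k : ℝ) * s + s by ring, this,
        ih s hs (by push_cast at hk; linarith)]
      module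
  -- nonneg case
  have hpos : ∀ t : ℝ, 0 ≤ t → t ≤ a → f t = (t / a) • f a := by
    intro t ht hta
    -- sequence: k n = ⌊ t * 2^n / a ⌋₊
    set k : ℕ → ℕ := fun n => ⌊t * 2 ^ n / a⌋₊ with hk
    have hknn : ∀ n, (k n : ℝ) * (a / 2 ^ n) ≤ t := by
      intro n
      have h1 : (k n : ℝ) ≤ t * 2 ^ n / a := Nat.floor_le (by positivity)
      have h2 : (0:ℝ) < 2 ^ n := by positivity
      calc (k n : ℝ) * (a / 2 ^ n) ≤ (t * 2 ^ n / a) * (a / 2 ^ n) := by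
            apply mul_le_mul_of_nonneg_right _ (by positivity)
            exact Nat.floor_le (by positivity)
        _ = t := by field_simp
    have hklb : ∀ n, t - a / 2 ^ n ≤ (k n : ℝ) * (a / 2 ^ n) := by
      intro n
      have h1 : t * 2 ^ n / a - 1 ≤ (k n : ℝ) := (Nat.sub_one_lt_floor (t * 2 ^ n / a)).le
      have h2 : (0:ℝ) < a / 2 ^ n := by positivity
      have := mul_le_mul_of_nonneg_right h1 h2.le
      calc t - a / 2 ^ n = (t * 2 ^ n / a - 1) * (a / 2 ^ n) := by field_simp
        _ ≤ (k n : ℝ) * (a / 2 ^ n) := this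
    -- value at dyadic points
    have hval : ∀ n, f ((k n : ℝ) * (a / 2 ^ n)) = (((k n : ℝ) * (a / 2 ^ n)) / a) • f a := by
      intro n
      have h2 : (0:ℝ) < 2 ^ n := by positivity
      have hfa : f a = ((2 ^ n : ℕ) : ℝ) • f (a / 2 ^ n) := by
        have := hnat (2 ^ n) (a / 2 ^ n) (by positivity) (by push_cast; field_simp; norm_num)
        rw [← this]; congr 1; push_cast; field_simp
      have hkn := hnat (k n) (a / 2 ^ n) (by positivity)
        (le_trans (hknn n) hta)
      rw [hkn]
      rw [hfa]
      push_cast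
      rw [smul_smul]
      congr 1
      field_simp
    -- limits
    have hlim1 : Tendsto (fun n => (k n : ℝ) * (a / 2 ^ n)) atTop (𝓝 t) := by
      have hz : Tendsto (fun n : ℕ => a / 2 ^ n) atTop (𝓝 0) := by
        simpa using tendsto_const_nhds.div_atTop
          (tendsto_pow_atTop_atTop_of_one_lt (by norm_num : (1:ℝ) < 2))
      have hlb : Tendsto (fun n : ℕ => t - a / 2 ^ n) atTop (𝓝 t) := by
        simpa using tendsto_const_nhds.sub hz
      exact tendsto_of_tendsto_of_tendsto_of_le_of_le hlb tendsto_const_nhds hklb hknn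
    have hmem : ∀ n, (k n : ℝ) * (a / 2 ^ n) ∈ Set.Icc (-a) a := by
      intro n
      constructor
      · have : (0:ℝ) ≤ (k n : ℝ) * (a / 2 ^ n) := by positivity
        linarith
      · exact le_trans (hknn n) hta
    have htmem : t ∈ Set.Icc (-a) a := ⟨by linarith, hta⟩
    have hcf : Tendsto (fun n => f ((k n : ℝ) * (a / 2 ^ n))) atTop (𝓝 (f t)) := by
      have := (hf t htmem).tendsto
      exact this.comp (tendsto_nhdsWithin_of_tendsto_nhds_of_eventually_within _ hlim1
        (Filter.Eventually.of_forall hmem))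
    have hcg : Tendsto (fun n => (((k n : ℝ) * (a / 2 ^ n)) / a) • f a) atTop
        (𝓝 ((t / a) • f a)) := by
      exact ((hlim1.div_const a).smul_const (f a))
    have : Tendsto (fun n => f ((k n : ℝ) * (a / 2 ^ n))) atTop (𝓝 ((t / a) • f a)) := by
      simpa only [hval] using hcg
    exact tendsto_nhds_unique hcf this
  intro t ht
  rcases le_or_gt 0 t with h | h
  · exact hpos t h (by rwa [abs_of_nonneg h] at ht)
  · have hnt : 0 ≤ -t := by linarith
    have hnta : -t ≤ a := by rwa [abs_of_neg h] at ht
    have h1 : f (-t) = ((-t) / a) • f a := hpos (-t) hnt hnta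
    have h2 : f t + f (-t) = 0 := by
      have := hadd t (-t) ht (by rwa [abs_neg]) (by simpa using ha.le)
      simp only [add_neg_cancel, h0] at this
      exact this.symm
    have : f t = -f (-t) := by
      rw [eq_neg_iff_add_eq_zero]; exact h2
    rw [this, h1]
    module

/-- The reparametrization map is linear: there is a continuous
matrix-valued map `A` with `z(u,x) = A(x)u` on `Ō_a`. -/
theorem stmt_17 {d : ℕ} {M : Type*} [MetricSpace M] [CompactSpace M]
    (Φ : EuclideanSpace ℝ (Fin d) → M → M)
    (hΦcont : Continuous fun p : EuclideanSpace ℝ (Fin d) × M => Φ p.1 p.2)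
    (hΦ0 : ∀ x, Φ 0 x = x)
    (hΦadd : ∀ u v : EuclideanSpace ℝ (Fin d), ∀ x : M, Φ (u + v) x = Φ u (Φ v x))
    (ε₀ : ℝ)
    (hε₀ : ε₀ = sInf ({r : ℝ | ∃ v : EuclideanSpace ℝ (Fin d),
      v ≠ 0 ∧ ‖v‖ = r ∧ ∃ x : M, Φ v x = x} ∪ {1}))
    (hε₀pos : 0 < ε₀)
    (Ψ : EuclideanSpace ℝ (Fin d) → M → M)
    (hΨcont : Continuous fun p : EuclideanSpace ℝ (Fin d) × M => Ψ p.1 p.2)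
    (hΨ0 : ∀ x, Ψ 0 x = x)
    (hΨadd : ∀ u v : EuclideanSpace ℝ (Fin d), ∀ x : M, Ψ (u + v) x = Ψ u (Ψ v x))
    (hcomm : ∀ u v : EuclideanSpace ℝ (Fin d), ∀ x : M, Φ v (Ψ u x) = Ψ u (Φ v x))
    (a μ : ℝ) (ha : 0 < a) (hμ : μ ∈ Set.Ioo 0 (ε₀ / 3))
    (z : EuclideanSpace ℝ (Fin d) → M → EuclideanSpace ℝ (Fin d))
    (hzcont : ContinuousOn (fun p : EuclideanSpace ℝ (Fin d) × M => z p.1 p.2)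
      (Metric.closedBall (0 : EuclideanSpace ℝ (Fin d)) a ×ˢ Set.univ))
    (hz : ∀ u ∈ Metric.closedBall (0 : EuclideanSpace ℝ (Fin d)) a, ∀ x : M,
      z u x ∈ Metric.closedBall (0 : EuclideanSpace ℝ (Fin d)) μ ∧ Ψ u x = Φ (z u x) x) :
    ∃ A : M → Matrix (Fin d) (Fin d) ℝ, Continuous A ∧
      ∀ x : M, ∀ u ∈ Metric.closedBall (0 : EuclideanSpace ℝ (Fin d)) a,
        z u x = Matrix.toEuclideanLin (A x) u := by
  classical
  obtain ⟨hμ0, hμlt⟩ := hμ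
  have h3μ : 3 * μ < ε₀ := by linarith
  -- small fixed vectors are zero
  have key : ∀ w : EuclideanSpace ℝ (Fin d), ‖w‖ < ε₀ → ∀ x : M, Φ w x = x → w = 0 := by
    intro w hw x hfix
    by_contra hne
    have hbdd : BddBelow ({r : ℝ | ∃ v : EuclideanSpace ℝ (Fin d),
        v ≠ 0 ∧ ‖v‖ = r ∧ ∃ x : M, Φ v x = x} ∪ {1}) := by
      refine ⟨0, ?_⟩
      rintro r (⟨v, _, rfl, _⟩ | rfl)
      · exact norm_nonneg v
      · norm_num
    have hmem : ‖w‖ ∈ ({r : ℝ | ∃ v : EuclideanSpace ℝ (Fin d),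
        v ≠ 0 ∧ ‖v‖ = r ∧ ∃ x : M, Φ v x = x} ∪ {1}) :=
      Or.inl ⟨w, hne, rfl, x, hfix⟩
    have : ε₀ ≤ ‖w‖ := hε₀ ▸ csInf_le hbdd hmem
    linarith
  -- cancellation
  have eqz : ∀ (u v : EuclideanSpace ℝ (Fin d)) (x : M),
      ‖u‖ + ‖v‖ < ε₀ → Φ u x = Φ v x → u = v := by
    intro u v x hn h
    have h2 := congrArg (Φ (-v)) h
    rw [← hΦadd, ← hΦadd, neg_add_cancel, hΦ0] at h2
    have h3 : Φ (u - v) x = x := by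
      rw [sub_eq_neg_add]
      exact h2
    have := key (u - v) (lt_of_le_of_lt (norm_sub_le u v) hn) x h3
    exact sub_eq_zero.mp this
  have zb : ∀ u ∈ Metric.closedBall (0 : EuclideanSpace ℝ (Fin d)) a, ∀ x : M,
      ‖z u x‖ ≤ μ := by
    intro u hu x
    have := (hz u hu x).1
    rwa [mem_closedBall_zero_iff] at this
  -- invariance along Φ-orbits
  have inv : ∀ u ∈ Metric.closedBall (0 : EuclideanSpace ℝ (Fin d)) a,
      ∀ (w : EuclideanSpace ℝ (Fin d)) (x : M), z u (Φ w x) = z u x := by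
    intro u hu w x
    have h1 : Φ (z u (Φ w x)) (Φ w x) = Ψ u (Φ w x) := ((hz u hu (Φ w x)).2).symm
    have h2 : Ψ u (Φ w x) = Φ (z u x) (Φ w x) := by
      rw [← hcomm, (hz u hu x).2, ← hΦadd, ← hΦadd, add_comm]
    have h3 : Φ (z u (Φ w x)) (Φ w x) = Φ (z u x) (Φ w x) := h1.trans h2
    exact eqz _ _ _ (by
      have b1 := zb u hu (Φ w x)
      have b2 := zb u hu x
      linarith) h3
  -- additivity
  have addz : ∀ u v : EuclideanSpace ℝ (Fin d),
      u ∈ Metric.closedBall (0 : EuclideanSpace ℝ (Fin d)) a →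
      v ∈ Metric.closedBall (0 : EuclideanSpace ℝ (Fin d)) a →
      u + v ∈ Metric.closedBall (0 : EuclideanSpace ℝ (Fin d)) a →
      ∀ x : M, z (u + v) x = z u x + z v x := by
    intro u v hu hv huv x
    have h1 : Φ (z (u + v) x) x = Ψ (u + v) x := ((hz _ huv x).2).symm
    have h2 : Ψ (u + v) x = Φ (z u x + z v x) x := by
      rw [hΨadd, (hz v hv x).2, (hz u hu (Φ (z v x) x)).2, inv u hu, ← hΦadd]
    have h3 := h1.trans h2
    refine eqz _ _ _ ?_ h3
    have b1 := zb _ huv x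
    have b2 := zb u hu x
    have b3 := zb v hv x
    have : ‖z u x + z v x‖ ≤ ‖z u x‖ + ‖z v x‖ := norm_add_le _ _
    linarith
  -- homogeneity along coordinate directions
  have hzx_cont : ∀ x : M, ContinuousOn (fun u => z u x)
      (Metric.closedBall (0 : EuclideanSpace ℝ (Fin d)) a) := by
    intro x
    exact hzcont.comp ((continuous_id.prodMk continuous_const).continuousOn)
      (fun u hu => ⟨hu, trivial⟩)
  have norm_eVec : ∀ j : Fin d, ‖eVec d j‖ = 1 := by
    intro j; simp [eVec, EuclideanSpace.norm_single]
  have mem_smul_eVec : ∀ (t : ℝ) (j : Fin d), |t| ≤ a →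
      t • eVec d j ∈ Metric.closedBall (0 : EuclideanSpace ℝ (Fin d)) a := by
    intro t j hta
    rw [mem_closedBall_zero_iff, norm_smul, norm_eVec, mul_one]
    exact hta
  have hom : ∀ (x : M) (j : Fin d) (t : ℝ), |t| ≤ a →
      z (t • eVec d j) x = (t / a) • z (a • eVec d j) x := by
    intro x j
    refine lin_of_add ha (fun t => z (t • eVec d j) x) ?_ ?_
    · exact (hzx_cont x).comp ((continuous_id.smul continuous_const).continuousOn)
        (fun s hs => mem_smul_eVec s j (abs_le.mpr ⟨hs.1, hs.2⟩))
    · intro s t hs ht hst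
      show z ((s + t) • eVec d j) x = z (s • eVec d j) x + z (t • eVec d j) x
      rw [add_smul]
      exact addz _ _ (mem_smul_eVec s j hs) (mem_smul_eVec t j ht)
        (by rw [← add_smul]; exact mem_smul_eVec _ j hst) x
  -- additivity over coordinates
  have sum_add : ∀ (x : M) (u : EuclideanSpace ℝ (Fin d)), ‖u‖ ≤ a →
      ∀ s : Finset (Fin d),
        z (∑ j ∈ s, u j • eVec d j) x = ∑ j ∈ s, z (u j • eVec d j) x := by
    intro x u hu s
    induction s using Finset.induction_on with
    | empty =>
      simp only [Finset.sum_empty]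
      -- z 0 x = 0
      have h0 : Φ (z 0 x) x = Φ 0 x := by
        rw [hΦ0]
        have h00 := (hz 0 (by simp [ha.le]) x).2
        rw [hΨ0] at h00
        exact h00.symm
      exact eqz _ _ _ (by
        have := zb 0 (by simp [ha.le]) x
        simp only [norm_zero, add_zero]
        linarith) h0
    | insert _ _ hjs =>
      rename_i j s ih
      rw [Finset.sum_insert hjs, Finset.sum_insert hjs, ← ih]
      have habs : ∀ i : Fin d, |u i| ≤ a := by
        intro i
        have h1 := partial_sum_norm_le u {i}
        simp only [Finset.sum_singleton] at h1
        rw [norm_smul, norm_eVec, mul_one] at h1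
        calc |u i| = ‖u i‖ := rfl
          _ ≤ ‖u‖ := h1
          _ ≤ a := hu
      have m1 : u j • eVec d j ∈ Metric.closedBall (0 : EuclideanSpace ℝ (Fin d)) a :=
        mem_smul_eVec _ j (habs j)
      have m2 : (∑ i ∈ s, u i • eVec d i) ∈
          Metric.closedBall (0 : EuclideanSpace ℝ (Fin d)) a := by
        rw [mem_closedBall_zero_iff]
        exact le_trans (partial_sum_norm_le u s) hu
      have m3 : (u j • eVec d j + ∑ i ∈ s, u i • eVec d i) ∈
          Metric.closedBall (0 : EuclideanSpace ℝ (Fin d)) a := by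
        have heq : u j • eVec d j + ∑ i ∈ s, u i • eVec d i
            = ∑ i ∈ insert j s, u i • eVec d i := (Finset.sum_insert (f := fun i => u i • eVec d i) hjs).symm
        rw [mem_closedBall_zero_iff, heq]
        exact le_trans (partial_sum_norm_le u _) hu
      exact addz _ _ m1 m2 m3 x
  -- define the matrix
  set e : Fin d → EuclideanSpace ℝ (Fin d) := eVec d with he
  refine ⟨fun x => Matrix.of fun i j => a⁻¹ * (z (a • e j) x) i, ?_, ?_⟩
  · -- continuity
    apply continuous_matrix
    intro i j
    have hc : Continuous fun x : M => z (a • e j) x := by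
      have hmem : ∀ x : M, ((a • e j, x) : EuclideanSpace ℝ (Fin d) × M) ∈
          Metric.closedBall (0 : EuclideanSpace ℝ (Fin d)) a ×ˢ Set.univ := by
        intro x
        exact ⟨mem_smul_eVec a j (by rw [abs_of_pos ha]), trivial⟩
      exact hzcont.comp_continuous (continuous_const.prodMk continuous_id) hmem
    exact continuous_const.mul (((EuclideanSpace.proj i).continuous).comp hc)
  · -- the identity
    intro x u hu
    rw [mem_closedBall_zero_iff] at hu
    have h1 : z u x = ∑ j, (u j / a) • z (a • e j) x := by
      conv_lhs => rw [← eVec_sum u]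
      rw [sum_add x u hu Finset.univ]
      refine Finset.sum_congr rfl ?_
      intro j _
      have habs : |u j| ≤ a := by
        have h1 := partial_sum_norm_le u {j}
        simp only [Finset.sum_singleton] at h1
        rw [norm_smul, norm_eVec, mul_one] at h1
        calc |u j| = ‖u j‖ := rfl
          _ ≤ ‖u‖ := h1
          _ ≤ a := hu
      exact hom x j (u j) habs
    rw [h1]
    -- compute toEuclideanLin entrywise
    ext i
    have h2 : (Matrix.toEuclideanLin (Matrix.of fun i j => a⁻¹ * (z (a • e j) x) i) u) i
        = ∑ j, (a⁻¹ * (z (a • e j) x) i) * u j := by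
      rw [Matrix.toEuclideanLin_apply]
      rfl
    rw [h2]
    have h3 : (∑ j, (u j / a) • z (a • e j) x) i = ∑ j, (u j / a) * (z (a • e j) x) i := by
      induction (Finset.univ : Finset (Fin d)) using Finset.induction_on with
      | empty => simp
      | insert _ _ hjs =>
        rename_i j s ih
        rw [Finset.sum_insert hjs, Finset.sum_insert hjs, ← ih]
        rfl
    rw [h3]
    refine Finset.sum_congr rfl fun j _ => ?_
    field_simp
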